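/- Let W̃ be the PPM super channel of a BI-DMC W with P_0 = W(·|0) everywhere positive and P_1 = W(·|1), let X_1,…,X_q be i.i.d. uniform bits and Ỹ the output of W̃ on input X_{1:q}, and for S ⊆ {1,…,q} let P_{Ỹ|X_{S^c}} denote the induced conditional pmf of Ỹ given X_{S^c}. Then for every x_{1:q} ∈ {0,1}^q and every ỹ ∈ 𝒴^{2^q} with W̃(ỹ|x_{1:q}) > 0, the likelihood ratio satisfies μ_0·μ_1 ≤ W̃(ỹ|x_{1:q}) / P_{Ỹ|X_{S^c}}(ỹ|x_{S^c}) ≤ 2^{|S|}, where μ_0 and μ_1 are the minimum positive masses of P_0 and P_1; in particular the per-letter information density is bounded in absolute value by max(log(1/(μ_0μ_1)), |S| log 2). -/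

import Mathlib

open Finset

def IsPMF {𝒵 : Type} [Fintype 𝒵] (P : 𝒵 → ℝ) : Prop :=
  (∀ z, 0 ≤ P z) ∧ ∑ z, P z = 1

/-- Least-significant-bit-first binary-to-decimal map. -/
def dIdx (q : ℕ) (x : Fin q → Bool) : ℕ :=
  ∑ j : Fin q, if x j then 2^(j:ℕ) else 0

lemma sum_two_pow (q : ℕ) : ∑ j ∈ Finset.range q, 2^j = 2^q - 1 := by
  induction q with
  | zero => simp
  | succ q ih =>
    rw [Finset.sum_range_succ, ih, pow_succ]
    have : 0 < 2^q := pow_pos (by norm_num) q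
    omega

lemma dIdx_lt (q : ℕ) (x : Fin q → Bool) : dIdx q x < 2^q := by
  have h1 : dIdx q x ≤ ∑ j : Fin q, 2^(j:ℕ) := by
    apply Finset.sum_le_sum
    intro j _
    split <;> simp
  have h2 : ∑ j : Fin q, 2^(j:ℕ) = 2^q - 1 := by
    rw [Fin.sum_univ_eq_sum_range (fun j => 2^j) q, sum_two_pow]
  have : 0 < 2^q := pow_pos (by norm_num) q
  omega

/-- Position (0-indexed) of the `1` in the PPM symbol encoding `x`. -/
def ppmPos (q : ℕ) (x : Fin q → Bool) : Fin (2^q) := ⟨dIdx q x, dIdx_lt q x⟩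

/-- PPM super channel of the binary-input channel `W`:
`W̃(yt|x) = P1(y_{d(x)}) ∏_{h ≠ d(x)} P0(y_h)`. -/
noncomputable def superCh {𝒴 : Type} [Fintype 𝒴] [DecidableEq 𝒴] (W : Bool → 𝒴 → ℝ)
    (q : ℕ) (x : Fin q → Bool) (yt : Fin (2^q) → 𝒴) : ℝ :=
  W true (yt (ppmPos q x)) * ∏ h ∈ univ.erase (ppmPos q x), W false (yt h)

/-- Conditional output pmf of the PPM super channel given the inputs off `S`:
`P_{Ỹ|X_{S^c}}(yt|x_{S^c}) = 2^{−|S|} ∑_{x_S} W̃(yt|x)`. -/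
noncomputable def condOut {𝒴 : Type} [Fintype 𝒴] [DecidableEq 𝒴] (W : Bool → 𝒴 → ℝ)
    (q : ℕ) (S : Finset (Fin q)) (x : Fin q → Bool) (yt : Fin (2^q) → 𝒴) : ℝ :=
  ((2:ℝ)^S.card)⁻¹ * ∑ xs : {i : Fin q // i ∈ S} → Bool,
    superCh W q (fun i => if h : i ∈ S then xs ⟨i, h⟩ else x i) yt

/-- Information density expectation `∑_{x,yt} 2^{−q} W̃(yt|x) log( P(yt|x_{A^c}) / P(yt|x_{B^c}) )`
(natural logarithm); with `A = ∅` and `B = S` this is `I(X_S;Ỹ|X_{S^c})`. -/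
noncomputable def infoDen {𝒴 : Type} [Fintype 𝒴] [DecidableEq 𝒴] (W : Bool → 𝒴 → ℝ)
    (q : ℕ) (A B : Finset (Fin q)) : ℝ :=
  ∑ x : Fin q → Bool, ∑ yt : Fin (2^q) → 𝒴,
    ((2:ℝ)^q)⁻¹ * superCh W q x yt * Real.log (condOut W q A x yt / condOut W q B x yt)

/-- Same with logarithm base 2 (information measured in bits). -/
noncomputable def infoDen2 {𝒴 : Type} [Fintype 𝒴] [DecidableEq 𝒴] (W : Bool → 𝒴 → ℝ)
    (q : ℕ) (A B : Finset (Fin q)) : ℝ :=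
  ∑ x : Fin q → Bool, ∑ yt : Fin (2^q) → 𝒴,
    ((2:ℝ)^q)⁻¹ * superCh W q x yt * Real.logb 2 (condOut W q A x yt / condOut W q B x yt)

/-- Indicator of a proposition. -/
noncomputable def ind (P : Prop) : ℝ := @ite ℝ P (Classical.propDecidable P) 1 0

/-- Bounds on the PPM super-channel likelihood ratio: for any `S ⊆ {1,…,q}` and any
input/output pair with `W̃(yt|x) > 0`,
`μ₀μ₁ ≤ W̃(yt|x)/P_{Ỹ|X_{S^c}}(yt|x_{S^c}) ≤ 2^{|S|}`, and the per-letter information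
density is bounded in absolute value by `max(log(1/(μ₀μ₁)), |S| log 2)`. -/
theorem stmt7 {𝒴 : Type} [Fintype 𝒴] [DecidableEq 𝒴]
    (W : Bool → 𝒴 → ℝ) (hW : ∀ x, IsPMF (W x)) (hpos : ∀ y, 0 < W false y)
    (q : ℕ) (S : Finset (Fin q))
    (μ0 μ1 : ℝ) (hμ0 : 0 < μ0) (hμ1 : 0 < μ1)
    (hμ0min : ∀ y, W false y ≠ 0 → μ0 ≤ W false y)
    (hμ1min : ∀ y, W true y ≠ 0 → μ1 ≤ W true y) :
    ∀ (x : Fin q → Bool) (yt : Fin (2^q) → 𝒴), 0 < superCh W q x yt →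
      μ0 * μ1 ≤ superCh W q x yt / condOut W q S x yt ∧
      superCh W q x yt / condOut W q S x yt ≤ (2:ℝ)^S.card ∧
      |Real.log (superCh W q x yt / condOut W q S x yt)|
        ≤ max (Real.log (1/(μ0*μ1))) (S.card * Real.log 2) := by

  intro x yt hx
  have hWnn : ∀ a y, 0 ≤ W a y := fun a => (hW a).1
  have hWle1 : ∀ a y, W a y ≤ 1 := by
    intro a y
    calc W a y ≤ ∑ z, W a z :=
          Finset.single_le_sum (fun z _ => hWnn a z) (Finset.mem_univ y)
      _ = 1 := (hW a).2
  have hSCnn : ∀ x' : Fin q → Bool, 0 ≤ superCh W q x' yt := by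
    intro x'
    exact mul_nonneg (hWnn _ _) (Finset.prod_nonneg fun h _ => hWnn _ _)
  set C : ℝ := ∏ h, W false (yt h) with hCdef
  have hC : 0 < C := Finset.prod_pos fun h _ => hpos _
  have hfull : ∀ j : Fin (2^q),
      W false (yt j) * ∏ h ∈ univ.erase j, W false (yt h) = C := by
    intro j
    exact Finset.mul_prod_erase univ (fun h => W false (yt h)) (Finset.mem_univ j)
  have hprod_erase : ∀ j : Fin (2^q),
      ∏ h ∈ univ.erase j, W false (yt h) = C / W false (yt j) := by
    intro j
    rw [eq_div_iff (ne_of_gt (hpos _)), mul_comm]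
    exact hfull j
  -- lower bound on superCh x
  have hxlb : μ1 * C ≤ superCh W q x yt := by
    unfold superCh at hx ⊢
    set j := ppmPos q x
    have h1 : 0 < W true (yt j) := by
      rcases mul_pos_iff.mp hx with ⟨h, _⟩ | ⟨h, _⟩
      · exact h
      · exact absurd (hWnn true (yt j)) (not_le.mpr h)
    have hμ1le : μ1 ≤ W true (yt j) := hμ1min _ (ne_of_gt h1)
    rw [hprod_erase j]
    have : C ≤ C / W false (yt j) := by
      rw [le_div_iff₀ (hpos _)]
      exact mul_le_of_le_one_right (le_of_lt hC) (hWle1 _ _)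
    calc μ1 * C ≤ W true (yt j) * C := by
          exact mul_le_mul_of_nonneg_right hμ1le (le_of_lt hC)
      _ ≤ W true (yt j) * (C / W false (yt j)) :=
          mul_le_mul_of_nonneg_left this (le_of_lt h1)
  -- upper bound on superCh x'
  have hub : ∀ x' : Fin q → Bool, superCh W q x' yt ≤ C / μ0 := by
    intro x'
    unfold superCh
    set j' := ppmPos q x'
    rw [hprod_erase j']
    have h0 : μ0 ≤ W false (yt j') := hμ0min _ (ne_of_gt (hpos _))
    have h2 : C / W false (yt j') ≤ C / μ0 :=
      div_le_div_of_nonneg_left (le_of_lt hC) hμ0 h0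
    calc W true (yt j') * (C / W false (yt j'))
        ≤ 1 * (C / W false (yt j')) :=
          mul_le_mul_of_nonneg_right (hWle1 _ _)
            (div_nonneg (le_of_lt hC) (hWnn _ _))
      _ = C / W false (yt j') := one_mul _
      _ ≤ C / μ0 := h2
  have key : ∀ x' : Fin q → Bool,
      μ0 * μ1 * superCh W q x' yt ≤ superCh W q x yt := by
    intro x'
    calc μ0 * μ1 * superCh W q x' yt ≤ μ0 * μ1 * (C / μ0) := by
          apply mul_le_mul_of_nonneg_left (hub x')
          positivity
      _ = μ1 * C := by field_simp
      _ ≤ superCh W q x yt := hxlb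
  -- cardinality
  have hcard : Fintype.card ({i : Fin q // i ∈ S} → Bool) = 2 ^ S.card := by
    rw [Fintype.card_fun, Fintype.card_bool, Fintype.card_coe]
  have h2S : (0:ℝ) < (2:ℝ)^S.card := by positivity
  -- the term at xs = x|S equals superCh x
  have hterm : superCh W q (fun i => if h : i ∈ S then (fun p : {i : Fin q // i ∈ S} => x p.1) ⟨i, h⟩ else x i) yt = superCh W q x yt := by
    congr 1
    funext i
    split <;> rfl
  have hcondlb : ((2:ℝ)^S.card)⁻¹ * superCh W q x yt ≤ condOut W q S x yt := by
    unfold condOut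
    apply mul_le_mul_of_nonneg_left _ (by positivity)
    have hs := Finset.single_le_sum
      (f := fun xs : {i : Fin q // i ∈ S} → Bool =>
        superCh W q (fun i => if h : i ∈ S then xs ⟨i, h⟩ else x i) yt)
      (fun xs _ => hSCnn _) (Finset.mem_univ (fun p : {i : Fin q // i ∈ S} => x p.1))
    simpa [hterm] using hs
  have hcondub : condOut W q S x yt ≤ superCh W q x yt / (μ0 * μ1) := by
    unfold condOut
    have hsum : ∑ xs : {i : Fin q // i ∈ S} → Bool,
        superCh W q (fun i => if h : i ∈ S then xs ⟨i, h⟩ else x i) yt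
        ≤ (2:ℝ)^S.card * (superCh W q x yt / (μ0 * μ1)) := by
      calc ∑ xs : {i : Fin q // i ∈ S} → Bool,
            superCh W q (fun i => if h : i ∈ S then xs ⟨i, h⟩ else x i) yt
          ≤ ∑ _xs : {i : Fin q // i ∈ S} → Bool, superCh W q x yt / (μ0 * μ1) := by
            apply Finset.sum_le_sum
            intro xs _
            rw [le_div_iff₀ (by positivity)]
            calc superCh W q _ yt * (μ0 * μ1)
                = μ0 * μ1 * superCh W q _ yt := by ring
              _ ≤ superCh W q x yt := key _
        _ = (2:ℝ)^S.card * (superCh W q x yt / (μ0 * μ1)) := by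
            rw [Finset.sum_const, Finset.card_univ, hcard]
            push_cast
            ring
    calc ((2:ℝ)^S.card)⁻¹ * ∑ xs : {i : Fin q // i ∈ S} → Bool,
          superCh W q (fun i => if h : i ∈ S then xs ⟨i, h⟩ else x i) yt
        ≤ ((2:ℝ)^S.card)⁻¹ * ((2:ℝ)^S.card * (superCh W q x yt / (μ0 * μ1))) :=
          mul_le_mul_of_nonneg_left hsum (by positivity)
      _ = superCh W q x yt / (μ0 * μ1) := by
          field_simp
  have hcondpos : 0 < condOut W q S x yt :=
    lt_of_lt_of_le (by positivity) hcondlb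
  have hlb : μ0 * μ1 ≤ superCh W q x yt / condOut W q S x yt := by
    rw [le_div_iff₀ hcondpos]
    calc μ0 * μ1 * condOut W q S x yt
        ≤ μ0 * μ1 * (superCh W q x yt / (μ0 * μ1)) :=
          mul_le_mul_of_nonneg_left hcondub (by positivity)
      _ = superCh W q x yt := by field_simp
  have hubr : superCh W q x yt / condOut W q S x yt ≤ (2:ℝ)^S.card := by
    rw [div_le_iff₀ hcondpos]
    calc superCh W q x yt
        = (2:ℝ)^S.card * (((2:ℝ)^S.card)⁻¹ * superCh W q x yt) := by
          field_simp
      _ ≤ (2:ℝ)^S.card * condOut W q S x yt :=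
          mul_le_mul_of_nonneg_left hcondlb (le_of_lt h2S)
  refine ⟨hlb, hubr, ?_⟩
  have hrpos : 0 < superCh W q x yt / condOut W q S x yt := div_pos hx hcondpos
  rw [abs_le]
  constructor
  · have h1 : Real.log (μ0 * μ1) ≤ Real.log (superCh W q x yt / condOut W q S x yt) :=
      Real.log_le_log (by positivity) hlb
    have h2 : Real.log (1/(μ0*μ1)) = - Real.log (μ0 * μ1) := by
      rw [one_div, Real.log_inv]
    have : -(max (Real.log (1/(μ0*μ1))) (↑S.card * Real.log 2))
        ≤ -(Real.log (1/(μ0*μ1))) := neg_le_neg (le_max_left _ _)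
    rw [h2, neg_neg] at this
    rw [h2]
    linarith
  · have h1 : Real.log (superCh W q x yt / condOut W q S x yt)
        ≤ Real.log ((2:ℝ)^S.card) := Real.log_le_log hrpos hubr
    rw [Real.log_pow] at h1
    exact le_trans h1 (le_max_right _ _)
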